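/- arXiv:2602.03021 — 5 statements merged into one kernel-verified Lean document; each statement's English description precedes it below -/
import Mathlib

section
/- Let A be a commutative ring, r a natural number, and f : Fin r → A a family of elements forming a regular sequence on A. Let I be the ideal generated by the f i and set S = A / I. Then the conormal module I/I² is a free S-module of rank r; more precisely, there is a basis of I/I² over S indexed by Fin r whose i-th element is the class of f i in I/I². -/
open RingTheory.Sequence



lemma aux_ofList_ofFn {A : Type*} [CommRing A] {n : ℕ} (g : Fin n → A) :
    Ideal.ofList (List.ofFn g) = Ideal.span (Set.range g) := by
  unfold Ideal.ofList
  congr 1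
  ext x; simp [List.mem_ofFn]

lemma aux_smul_top {A : Type*} [CommRing A] (J : Ideal A) : (J • ⊤ : Submodule A A) = J := by
  rw [smul_eq_mul, Ideal.mul_top]

/-- Key lemma: coefficients of a vanishing combination of a weakly regular sequence
lie in the ideal generated by the sequence. -/
lemma aux_coeff_mem {A : Type*} [CommRing A] :
    ∀ (r : ℕ) (f : Fin r → A), IsWeaklyRegular A (List.ofFn f) →
      ∀ a : Fin r → A, (∑ i, a i * f i) = 0 → ∀ i, a i ∈ Ideal.span (Set.range f) := by
  intro r
  induction r with
  | zero => intro f _ a _ i; exact i.elim0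
  | succ r IH =>
    intro f hreg a hsum
    have hsplit : List.ofFn f = List.ofFn (f ∘ Fin.castSucc) ++ [f (Fin.last r)] := by
      rw [List.ofFn_succ', List.concat_eq_append]; rfl
    rw [hsplit, isWeaklyRegular_append_iff, isWeaklyRegular_singleton_iff] at hreg
    obtain ⟨hpre, hlast⟩ := hreg
    set I₀ : Ideal A := Ideal.span (Set.range (f ∘ Fin.castSucc)) with hI₀
    have hIeq : (Ideal.ofList (List.ofFn (f ∘ Fin.castSucc)) • ⊤ : Submodule A A) = I₀ := by
      rw [aux_ofList_ofFn, aux_smul_top]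
    have hsum' : (∑ i : Fin r, a i.castSucc * f i.castSucc) + a (Fin.last r) * f (Fin.last r) = 0 := by
      rw [← Fin.sum_univ_castSucc (f := fun i => a i * f i)]; exact hsum
    have hmem₀ : ∀ x : A, x ∈ I₀ ↔ Submodule.Quotient.mk (p := (Ideal.ofList (List.ofFn (f ∘ Fin.castSucc)) • ⊤ : Submodule A A)) x = 0 := by
      intro x
      rw [Submodule.Quotient.mk_eq_zero, hIeq]
    have hfC : ∀ i : Fin r, f i.castSucc ∈ I₀ :=
      fun i => Ideal.subset_span ⟨i, rfl⟩
    have hmul : a (Fin.last r) * f (Fin.last r) ∈ I₀ := by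
      have h : a (Fin.last r) * f (Fin.last r) = -∑ i : Fin r, a i.castSucc * f i.castSucc := by
        linear_combination hsum'
      rw [h]
      exact neg_mem (Ideal.sum_mem _ fun i _ => Ideal.mul_mem_left _ _ (hfC i))
    have hlastmem : a (Fin.last r) ∈ I₀ := by
      rw [hmem₀]
      apply hlast
      show Submodule.Quotient.mk (f (Fin.last r) • a (Fin.last r)) = f (Fin.last r) • (0 : _)
      rw [smul_zero]
      exact (hmem₀ _).mp (by rwa [smul_eq_mul, mul_comm])
    obtain ⟨b, hb⟩ := (Submodule.mem_span_range_iff_exists_fun A).mp hlastmem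
    simp only [Function.comp_apply] at hb
    have hIH := IH (f ∘ Fin.castSucc) hpre (fun i => a i.castSucc + b i * f (Fin.last r)) (by
      simp only [Function.comp_apply]
      have h1 : ∑ i : Fin r, (a i.castSucc + b i * f (Fin.last r)) * f i.castSucc
          = (∑ i : Fin r, a i.castSucc * f i.castSucc)
            + (∑ i : Fin r, b i • f i.castSucc) * f (Fin.last r) := by
        rw [Finset.sum_mul, ← Finset.sum_add_distrib]
        congr 1; ext i; simp only [smul_eq_mul]; ring
      rw [h1, hb]
      linear_combination hsum')
    have hsub : I₀ ≤ Ideal.span (Set.range f) := by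
      apply Ideal.span_mono
      rintro _ ⟨i, rfl⟩; exact ⟨i.castSucc, rfl⟩
    have hflast : f (Fin.last r) ∈ Ideal.span (Set.range f) :=
      Ideal.subset_span ⟨Fin.last r, rfl⟩
    intro i
    refine Fin.lastCases ?_ ?_ i
    · exact hsub hlastmem
    · intro j
      have h4 := hIH j
      have h3 : a j.castSucc = (a j.castSucc + b j * f (Fin.last r)) - b j * f (Fin.last r) := by ring
      rw [h3]
      exact sub_mem (hsub h4) (Ideal.mul_mem_left _ _ hflast)

/-- Any element of `I^2`, where `I = span (range f)`, is a combination of the `f i`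
with coefficients in `I`. -/
lemma aux_sq_decomp {A : Type*} [CommRing A] {r : ℕ} (f : Fin r → A)
    (g : A) (hg : g ∈ (Ideal.span (Set.range f)) ^ 2) :
    ∃ c : Fin r → A, (∀ i, c i ∈ Ideal.span (Set.range f)) ∧ g = ∑ i, c i * f i := by
  set I := Ideal.span (Set.range f) with hI
  rw [pow_two] at hg
  refine Submodule.mul_induction_on hg ?_ ?_
  · intro m hm n hn
    obtain ⟨d, hd⟩ := (Submodule.mem_span_range_iff_exists_fun A).mp hn
    refine ⟨fun i => m * d i, fun i => Ideal.mul_mem_right _ _ hm, ?_⟩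
    rw [← hd, Finset.mul_sum]
    congr 1; ext i; simp only [smul_eq_mul]; ring
  · rintro x y ⟨c₁, hc₁, rfl⟩ ⟨c₂, hc₂, rfl⟩
    exact ⟨fun i => c₁ i + c₂ i, fun i => add_mem (hc₁ i) (hc₂ i),
      by rw [← Finset.sum_add_distrib]; congr 1; ext i; ring⟩




/-- If `f : Fin r → A` is a regular sequence on the commutative ring `A` generating the
ideal `I`, then the conormal module `I/I²` is free of rank `r` over `A ⧸ I`, with basis
given by the classes of the `f i`. -/
theorem conormal_basis_of_regular_sequence {A : Type*} [CommRing A] {r : ℕ}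
    (f : Fin r → A) (hreg : RingTheory.Sequence.IsRegular A (List.ofFn f))
    (I : Ideal A) (hI : I = Ideal.span (Set.range f)) :
    ∃ b : Module.Basis (Fin r) (A ⧸ I) I.Cotangent,
      ∀ i : Fin r,
        b i = I.toCotangent ⟨f i, hI ▸ Ideal.subset_span (Set.mem_range_self i)⟩ := by
  subst hI
  set I := Ideal.span (Set.range f) with hI
  set v : Fin r → I.Cotangent :=
    fun i => I.toCotangent ⟨f i, Ideal.subset_span (Set.mem_range_self i)⟩ with hv
  have hsmul : ∀ (a : A) (x : I),
      (Ideal.Quotient.mk I a) • I.toCotangent x = I.toCotangent (a • x) := fun _ _ => rfl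
  -- linear independence
  have hli : LinearIndependent (A ⧸ I) v := by
    rw [Fintype.linearIndependent_iff]
    intro g hg
    choose a ha using fun i => Ideal.Quotient.mk_surjective (g i)
    have hcalc : ∑ i, g i • v i
        = I.toCotangent (∑ i, a i • (⟨f i, Ideal.subset_span (Set.mem_range_self i)⟩ : I)) := by
      rw [map_sum]
      congr 1; ext i
      rw [← ha i, hsmul]
    rw [hcalc, Ideal.toCotangent_eq_zero] at hg
    have hcoe : ((∑ i, a i • (⟨f i, Ideal.subset_span (Set.mem_range_self i)⟩ : I) : I) : A)
        = ∑ i, a i * f i := by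
      push_cast
      rfl
    rw [hcoe] at hg
    obtain ⟨c, hc, hgc⟩ := aux_sq_decomp f _ hg
    have hzero : ∑ i, (a i - c i) * f i = 0 := by
      have h5 : ∑ i, (a i - c i) * f i = (∑ i, a i * f i) - ∑ i, c i * f i := by
        rw [← Finset.sum_sub_distrib]
        congr 1; ext i; ring
      rw [h5, ← hgc, sub_self]
    have hmem := aux_coeff_mem r f hreg.toIsWeaklyRegular _ hzero
    intro i
    have : a i ∈ I := by
      have h1 := hmem i
      have : a i = (a i - c i) + c i := by ring
      rw [this]
      exact add_mem h1 (hc i)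
    rw [← ha i, Ideal.Quotient.eq_zero_iff_mem]
    exact this
  -- spanning
  have hspan : ⊤ ≤ Submodule.span (A ⧸ I) (Set.range v) := by
    rintro x -
    obtain ⟨y, rfl⟩ := I.toCotangent_surjective x
    obtain ⟨c, hc⟩ := (Submodule.mem_span_range_iff_exists_fun A).mp y.2
    have hy : y = ∑ i, c i • (⟨f i, Ideal.subset_span (Set.mem_range_self i)⟩ : I) := by
      ext
      push_cast
      exact hc.symm
    rw [hy, map_sum]
    refine Submodule.sum_mem _ fun i _ => ?_
    rw [← hsmul]
    exact Submodule.smul_mem _ _ (Submodule.subset_span ⟨i, rfl⟩)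
  exact ⟨Module.Basis.mk hli hspan, fun i => Module.Basis.mk_apply hli hspan i⟩
end

section
/- Let R be a commutative ring, n and m natural numbers, f : Fin m → R[x₁,…,x_n] a family of polynomials, I the ideal generated by the f j, and S = R[x₁,…,x_n]/I. Let J be the n × m Jacobian matrix over S whose (i, j) entry is the image in S of the partial derivative ∂f_j/∂x_i. Then the module of Kähler differentials Ω_{S/R} is isomorphic as an S-module to the cokernel of the S-linear map S^m → S^n given by multiplication by the matrix J. -/
open MvPolynomial TensorProduct

lemma mkDerivation_single_apply' {R : Type*} [CommRing R] {σ : Type*} [DecidableEq σ]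
    (x : MvPolynomial σ R) (i : σ) :
    (MvPolynomial.mkDerivation R (fun j : σ => Finsupp.single j (1 : MvPolynomial σ R)) x) i
      = pderiv i x := by
  have : ((Finsupp.lapply i : (σ →₀ MvPolynomial σ R) →ₗ[MvPolynomial σ R] MvPolynomial σ R).compDer
      (MvPolynomial.mkDerivation R (fun j : σ => Finsupp.single j (1 : MvPolynomial σ R))))
      = pderiv i := by
    apply MvPolynomial.derivation_ext
    intro j
    simp [Finsupp.single_apply, Pi.single_apply]
  exact DFunLike.congr_fun this x

set_option maxHeartbeats 1000000 in
set_option synthInstance.maxHeartbeats 400000 in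
open MvPolynomial in
/-- Jacobian presentation of Kähler differentials: if `S = R[x₁,…,xₙ]⧸I` with
`I = (f₁,…,f_m)`, then `Ω_{S/R}` is the cokernel of the linear map `Sᵐ → Sⁿ` given by the
Jacobian matrix `J = (∂f_j/∂x_i)`. -/
theorem kaehler_iso_coker_jacobian {R : Type*} [CommRing R] {n m : ℕ}
    (f : Fin m → MvPolynomial (Fin n) R)
    (I : Ideal (MvPolynomial (Fin n) R)) (hI : I = Ideal.span (Set.range f))
    (J : Matrix (Fin n) (Fin m) (MvPolynomial (Fin n) R ⧸ I))
    (hJ : ∀ i j, J i j = Ideal.Quotient.mk I (pderiv i (f j))) :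
    Nonempty ((Ω[(MvPolynomial (Fin n) R ⧸ I)⁄R]) ≃ₗ[MvPolynomial (Fin n) R ⧸ I]
      ((Fin n → MvPolynomial (Fin n) R ⧸ I) ⧸ LinearMap.range J.mulVecLin)) := by
  classical
  set b := KaehlerDifferential.mvPolynomialBasis R (Fin n) with hb
  have hsurj : Function.Surjective
      (algebraMap (MvPolynomial (Fin n) R) (MvPolynomial (Fin n) R ⧸ I)) :=
    Ideal.Quotient.mk_surjective
  set φ := KaehlerDifferential.mapBaseChange R (MvPolynomial (Fin n) R)
    (MvPolynomial (Fin n) R ⧸ I) with hφ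
  have φsurj : Function.Surjective φ :=
    KaehlerDifferential.mapBaseChange_surjective _ _ _ hsurj
  have hIker : RingHom.ker
      (algebraMap (MvPolynomial (Fin n) R) (MvPolynomial (Fin n) R ⧸ I)) = I := by
    rw [Ideal.Quotient.algebraMap_eq, Ideal.mk_ker]
  set g : Fin m → (MvPolynomial (Fin n) R ⧸ I) ⊗[MvPolynomial (Fin n) R]
      (Ω[(MvPolynomial (Fin n) R)⁄R]) :=
    fun j => (1 : MvPolynomial (Fin n) R ⧸ I) ⊗ₜ[MvPolynomial (Fin n) R]
      (KaehlerDifferential.D R (MvPolynomial (Fin n) R) (f j)) with hg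
  have hfI : ∀ j, f j ∈ I := fun j => hI ▸ Ideal.subset_span (Set.mem_range_self j)
  set N := Submodule.span (MvPolynomial (Fin n) R) (Set.range g) with hN
  have hrange : LinearMap.range (KaehlerDifferential.kerCotangentToTensor R
      (MvPolynomial (Fin n) R) (MvPolynomial (Fin n) R ⧸ I)) = N := by
    apply le_antisymm
    · rintro _ ⟨c, rfl⟩
      obtain ⟨x, rfl⟩ := Ideal.toCotangent_surjective _ c
      rw [KaehlerDifferential.kerCotangentToTensor_toCotangent]
      set T : Submodule (MvPolynomial (Fin n) R) (MvPolynomial (Fin n) R) :=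
        { carrier := {y | y ∈ I ∧ (1 : MvPolynomial (Fin n) R ⧸ I) ⊗ₜ[MvPolynomial (Fin n) R]
            (KaehlerDifferential.D R (MvPolynomial (Fin n) R) y) ∈ N}
          add_mem' := by
            rintro a c ⟨ha, ha'⟩ ⟨hc, hc'⟩
            exact ⟨add_mem ha hc, by rw [map_add, TensorProduct.tmul_add]; exact add_mem ha' hc'⟩
          zero_mem' := ⟨zero_mem _, by simp⟩
          smul_mem' := by
            rintro c y ⟨hy, hy'⟩
            refine ⟨Ideal.mul_mem_left _ _ hy, ?_⟩
            have h2 : (1 : MvPolynomial (Fin n) R ⧸ I) ⊗ₜ[MvPolynomial (Fin n) R]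
                (y • KaehlerDifferential.D R (MvPolynomial (Fin n) R) c) = 0 := by
              rw [TensorProduct.tmul_smul,
                ← algebraMap_smul (MvPolynomial (Fin n) R ⧸ I) y,
                Ideal.Quotient.algebraMap_eq, Ideal.Quotient.eq_zero_iff_mem.mpr hy]
              exact zero_smul (MvPolynomial (Fin n) R ⧸ I) ((1 : MvPolynomial (Fin n) R ⧸ I) ⊗ₜ[MvPolynomial (Fin n) R]
                (KaehlerDifferential.D R (MvPolynomial (Fin n) R) c))
            rw [smul_eq_mul, Derivation.leibniz, TensorProduct.tmul_add, TensorProduct.tmul_smul,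
              h2, add_zero]
            exact Submodule.smul_mem _ _ hy' } with hT
      have hIT : I ≤ T := by
        rw [hI]
        refine Submodule.span_le.mpr ?_
        rintro _ ⟨j, rfl⟩
        exact ⟨hfI j, Submodule.subset_span ⟨j, rfl⟩⟩
      have hxI : (x : MvPolynomial (Fin n) R) ∈ I := (SetLike.ext_iff.mp hIker _).mp x.2
      exact (hIT hxI).2
    · rw [hN]
      refine Submodule.span_le.mpr ?_
      rintro _ ⟨j, rfl⟩
      have hfj : f j ∈ RingHom.ker
          (algebraMap (MvPolynomial (Fin n) R) (MvPolynomial (Fin n) R ⧸ I)) := by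
        rw [hIker]; exact hfI j
      refine ⟨Ideal.toCotangent _ ⟨f j, hfj⟩, ?_⟩
      rw [KaehlerDifferential.kerCotangentToTensor_toCotangent, hg]
  have hkerres : (LinearMap.ker φ).restrictScalars (MvPolynomial (Fin n) R) = N := by
    rw [← hrange, KaehlerDifferential.range_kerCotangentToTensor _ _ _ hsurj]
  have hker : LinearMap.ker φ = Submodule.span (MvPolynomial (Fin n) R ⧸ I) (Set.range g) := by
    apply le_antisymm
    · intro x hx
      have h1 : x ∈ N := by rw [← hkerres]; exact hx
      have h2 : N ≤ (Submodule.span (MvPolynomial (Fin n) R ⧸ I)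
          (Set.range g)).restrictScalars (MvPolynomial (Fin n) R) :=
        Submodule.span_le.mpr Submodule.subset_span
      exact h2 h1
    · refine Submodule.span_le.mpr ?_
      rintro _ ⟨j, rfl⟩
      have : g j ∈ N := Submodule.subset_span ⟨j, rfl⟩
      rw [← hkerres] at this
      exact this
  set e := (b.baseChange (MvPolynomial (Fin n) R ⧸ I)).equivFun with he
  have heg : ∀ j, e (g j) = J.transpose j := by
    intro j
    funext i
    rw [he, Module.Basis.equivFun_apply, hg]
    rw [Module.Basis.baseChange_repr_tmul]
    rw [hb, KaehlerDifferential.mvPolynomialBasis_repr_D]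
    rw [mkDerivation_single_apply',
      ← algebraMap_smul (MvPolynomial (Fin n) R ⧸ I) (pderiv i (f j)) (1 : _), smul_eq_mul,
      mul_one, Ideal.Quotient.algebraMap_eq, Matrix.transpose_apply, hJ]
  have hmap : (LinearMap.ker φ).map (e : _ →ₗ[MvPolynomial (Fin n) R ⧸ I] _)
      = LinearMap.range J.mulVecLin := by
    have hcomp : ⇑e ∘ g = J.transpose := funext heg
    rw [hker, Submodule.map_span, ← Set.range_comp, LinearEquiv.coe_coe, hcomp, Matrix.range_mulVecLin]
    rfl
  exact ⟨((φ.quotKerEquivOfSurjective φsurj).symm.trans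
    (Submodule.Quotient.equiv _ _ e hmap))⟩
end

section
/- Let R be a commutative ring, n a natural number, f : Fin n → R[x₁,…,x_n] a family of n polynomials in n variables, I the ideal generated by the f j, and S = R[x₁,…,x_n]/I. Let J be the n × n Jacobian matrix over S whose (i, j) entry is the image in S of ∂f_j/∂x_i. Then S is formally unramified over R if and only if the determinant of J is a unit in S. -/
open MvPolynomial in
/-- If `S = R[x₁,…,xₙ]⧸I` with `I = (f₁,…,fₙ)` (as many equations as variables), then `S`
is formally unramified over `R` if and only if the determinant of the Jacobian matrix
`J = (∂f_j/∂x_i)` is a unit in `S`. -/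
theorem formallyUnramified_iff_isUnit_jacobian_det {R : Type*} [CommRing R] {n : ℕ}
    (f : Fin n → MvPolynomial (Fin n) R)
    (I : Ideal (MvPolynomial (Fin n) R)) (hI : I = Ideal.span (Set.range f))
    (J : Matrix (Fin n) (Fin n) (MvPolynomial (Fin n) R ⧸ I))
    (hJ : ∀ i j, J i j = Ideal.Quotient.mk I (pderiv i (f j))) :
    Algebra.FormallyUnramified R (MvPolynomial (Fin n) R ⧸ I) ↔ IsUnit J.det := by
  classical
  -- A generating family for `MvPolynomial (Fin n) R ⧸ I` over `R`: the images of the variables.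
  have hsurj : Function.Surjective
      (aeval (R := R) (fun i : Fin n => Ideal.Quotient.mk I (X i))) := by
    have : (aeval (R := R) (fun i : Fin n => Ideal.Quotient.mk I (X i)))
        = Ideal.Quotient.mkₐ R I := by
      apply MvPolynomial.algHom_ext
      intro i
      simp
    rw [this]
    exact Ideal.Quotient.mkₐ_surjective R I
  set G : Algebra.Generators R (MvPolynomial (Fin n) R ⧸ I) (Fin n) :=
    Algebra.Generators.ofSurjective _ hsurj with hG
  have hval : ∀ p : MvPolynomial (Fin n) R, aeval G.val p = Ideal.Quotient.mk I p := by
    intro p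
    have : (aeval (R := R) G.val : MvPolynomial (Fin n) R →ₐ[R] (MvPolynomial (Fin n) R ⧸ I))
        = Ideal.Quotient.mkₐ R I := by
      apply MvPolynomial.algHom_ext
      intro i
      simp only [hG, Algebra.Generators.ofSurjective_val, aeval_X]; rfl
    rw [this]; rfl
  have hkerI : G.toExtension.ker = Ideal.span (Set.range f) := by
    rw [show Ideal.span (Set.range f) = I from hI.symm]
    show G.ker = I
    rw [Algebra.Generators.ker_eq_ker_aeval_val]
    ext p
    simp only [RingHom.mem_ker]
    rw [hval]
    exact Ideal.Quotient.eq_zero_iff_mem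
  have hmemiff : ∀ p : MvPolynomial (Fin n) R,
      p ∈ G.toExtension.ker ↔ p ∈ Ideal.span (Set.range f) := fun p =>
    SetLike.ext_iff.mp hkerI p
  have hmem : ∀ j, f j ∈ G.toExtension.ker := fun j =>
    (hmemiff (f j)).mpr (Ideal.subset_span ⟨j, rfl⟩)
  set gmk : Fin n → G.toExtension.Cotangent :=
    fun j => Algebra.Extension.Cotangent.mk ⟨f j, hmem j⟩ with hgmk
  -- The images of the `f j` generate the cotangent module `I/I²`.
  have hspan : Submodule.span (MvPolynomial (Fin n) R ⧸ I) (Set.range gmk) = ⊤ := by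
    rw [Submodule.eq_top_iff']
    intro x
    obtain ⟨⟨p, hp⟩, rfl⟩ := Algebra.Extension.Cotangent.mk_surjective x
    have hp' : p ∈ Ideal.span (Set.range f) := (hmemiff p).mp hp
    revert hp
    have key : ∀ q ∈ Ideal.span (Set.range f),
        ∀ hq : q ∈ G.toExtension.ker,
        Algebra.Extension.Cotangent.mk ⟨q, hq⟩ ∈
          Submodule.span (MvPolynomial (Fin n) R ⧸ I) (Set.range gmk) := by
      intro q hq
      induction hq using Submodule.span_induction with
      | mem x hx =>
        obtain ⟨j, rfl⟩ := hx
        intro h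
        exact Submodule.subset_span ⟨j, rfl⟩
      | zero =>
        intro h
        have h0 : (⟨0, h⟩ : G.toExtension.ker) = 0 := rfl
        erw [h0, map_zero]
        exact Submodule.zero_mem _
      | add x y hx hy ihx ihy =>
        intro h
        have hx' : x ∈ G.toExtension.ker := (hmemiff x).mpr hx
        have hy' : y ∈ G.toExtension.ker := (hmemiff y).mpr hy
        have h0 : (⟨x + y, h⟩ : G.toExtension.ker) = ⟨x, hx'⟩ + ⟨y, hy'⟩ := rfl
        rw [h0, map_add]
        exact Submodule.add_mem _ (ihx hx') (ihy hy')
      | smul r x hx ihx =>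
        intro h
        have hx' : x ∈ G.toExtension.ker := (hmemiff x).mpr hx
        convert Submodule.smul_mem _
          ((algebraMap G.toExtension.Ring (MvPolynomial (Fin n) R ⧸ I)) r) (ihx hx') using 1
        exact (Algebra.Extension.Cotangent.mk (P := G.toExtension)).map_smul r ⟨x, hx'⟩
    exact fun hp => key p hp' hp
  -- reduce formal unramifiedness to surjectivity of the cotangent complex
  have hsubs : Algebra.FormallyUnramified R (MvPolynomial (Fin n) R ⧸ I) ↔
      Function.Surjective G.toExtension.cotangentComplex := by
    rw [Algebra.formallyUnramified_iff]
    constructor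
    · intro h y
      have h0 : G.toExtension.toKaehler y = 0 := Subsingleton.elim _ _
      exact (G.toExtension.exact_cotangentComplex_toKaehler y).mp h0
    · intro h
      refine subsingleton_of_forall_eq 0 fun w => ?_
      obtain ⟨y, rfl⟩ := G.toExtension.toKaehler_surjective w
      obtain ⟨x, rfl⟩ := h y
      exact (G.toExtension.exact_cotangentComplex_toKaehler
        (G.toExtension.cotangentComplex x)).mpr ⟨x, rfl⟩
  rw [hsubs, ← LinearMap.range_eq_top]
  -- the range of the cotangent complex is spanned by the images of the `f j`
  have hrange : LinearMap.range G.toExtension.cotangentComplex =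
      Submodule.span (MvPolynomial (Fin n) R ⧸ I)
        (Set.range fun j => G.toExtension.cotangentComplex (gmk j)) := by
    conv_lhs => rw [← Submodule.map_top, ← hspan]
    rw [Submodule.map_span, ← Set.range_comp]
    rfl
  rw [hrange]
  -- express everything in the coordinates of the basis `dxᵢ`
  let e : G.toExtension.CotangentSpace ≃ₗ[MvPolynomial (Fin n) R ⧸ I]
      (Fin n → MvPolynomial (Fin n) R ⧸ I) := G.cotangentSpaceBasis.equivFun
  have hrepr : ∀ j : Fin n, e (G.toExtension.cotangentComplex (gmk j)) = J.transpose j := by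
    intro j
    funext i
    show G.cotangentSpaceBasis.equivFun (G.toExtension.cotangentComplex (gmk j)) i = _
    rw [Module.Basis.equivFun_apply, hgmk]
    rw [Algebra.Extension.cotangentComplex_mk,
      Algebra.Generators.cotangentSpaceBasis_repr_one_tmul, hval, Matrix.transpose_apply, hJ]
  have hmap : Submodule.map
      (e : G.toExtension.CotangentSpace →ₗ[MvPolynomial (Fin n) R ⧸ I]
        (Fin n → MvPolynomial (Fin n) R ⧸ I))
      (Submodule.span (MvPolynomial (Fin n) R ⧸ I)
        (Set.range fun j => G.toExtension.cotangentComplex (gmk j))) =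
      Submodule.span (MvPolynomial (Fin n) R ⧸ I) (Set.range J.transpose) := by
    rw [Submodule.map_span, ← Set.range_comp]
    congr 1
    exact congrArg Set.range (funext fun j => hrepr j)
  have hJt : Submodule.span (MvPolynomial (Fin n) R ⧸ I) (Set.range J.transpose) = ⊤ ↔
      IsUnit J.det := by
    rw [show Set.range J.transpose = Set.range J.transpose.row from rfl,
      ← range_vecMulLinear, LinearMap.range_eq_top, Matrix.coe_vecMulLinear,
      Matrix.vecMul_surjective_iff_isUnit, Matrix.isUnit_iff_isUnit_det, Matrix.det_transpose]
  rw [← hJt, ← hmap]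
  constructor
  · intro h
    rw [h, Submodule.map_top, LinearMap.range_eq_top]
    exact e.surjective
  · intro h
    refine LinearMap.map_injective
      (f := (e : G.toExtension.CotangentSpace →ₗ[MvPolynomial (Fin n) R ⧸ I]
        (Fin n → MvPolynomial (Fin n) R ⧸ I))) e.ker (h.trans ?_)
    symm
    rw [Submodule.map_top, LinearMap.range_eq_top]
    exact e.surjective
end

section
/- Let A be a commutative ring and B a commutative A-algebra. If B is flat as an A-module, finitely presented as an A-algebra, and formally unramified over A, then B is étale over A, i.e., formally étale and of finite presentation. -/
universe u

open TensorProduct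

namespace EtaleAuxProof

variable {A B D : Type u} [CommRing A] [CommRing B] [Algebra A B]
  [CommRing D] [Algebra A D]

section

variable (q : D →ₐ[A] B)

/-- The kernel of `q` as an `A`-submodule. -/
noncomputable abbrev Ker : Submodule A D := LinearMap.ker q.toLinearMap

lemma ker_apply (m : Ker q) : q (m : D) = 0 := LinearMap.mem_ker.mp m.2

variable {q}
variable (hq : Function.Surjective ⇑q)
variable (hk : ∀ d₁ d₂ : D, q d₁ = 0 → q d₂ = 0 → d₁ * d₂ = 0)

/-- A set-theoretic section of `q`. -/
noncomputable def sec (b : B) : D := Function.surjInv hq b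

lemma sec_spec (b : B) : q (sec hq b) = b := Function.surjInv_eq hq b

include hk in
lemma hmul (d₁ d₂ m : D) (h : q d₁ = q d₂) (hm : q m = 0) : d₁ * m = d₂ * m := by
  have h0 : (d₁ - d₂) * m = 0 := hk _ _ (by rw [map_sub, h, sub_self]) hm
  rw [sub_mul, sub_eq_zero] at h0
  exact h0

/-- The action of `b : B` on the square-zero kernel of `q`. -/
noncomputable def act (b : B) (m : Ker q) : Ker q :=
  ⟨sec hq b * m, by
    simp only [LinearMap.mem_ker, AlgHom.toLinearMap_apply, map_mul, ker_apply q m, mul_zero]⟩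

lemma act_coe (b : B) (m : Ker q) : (act hq b m : D) = sec hq b * m := rfl

include hk in
lemma act_lift (d : D) (m : Ker q) : (act hq (q d) m : D) = d * m :=
  hmul hk _ _ _ (sec_spec hq (q d)) (ker_apply q m)

/-- The action as an `A`-bilinear map. -/
noncomputable def bil : B →ₗ[A] Ker q →ₗ[A] Ker q where
  toFun b :=
    { toFun := act hq b
      map_add' := fun m m' => Subtype.ext <| by
        simp only [act_coe, Submodule.coe_add, mul_add]
      map_smul' := fun a m => Subtype.ext <| by
        simp only [act_coe, SetLike.val_smul, RingHom.id_apply, mul_smul_comm] }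
  map_add' b b' := LinearMap.ext fun m => Subtype.ext <| by
    simp only [LinearMap.coe_mk, AddHom.coe_mk, LinearMap.add_apply, Submodule.coe_add, act_coe]
    rw [← add_mul]
    exact hmul hk _ _ _ (by rw [map_add, sec_spec, sec_spec, sec_spec]) (ker_apply q m)
  map_smul' a b := LinearMap.ext fun m => Subtype.ext <| by
    simp only [LinearMap.coe_mk, AddHom.coe_mk, RingHom.id_apply, LinearMap.smul_apply,
      SetLike.val_smul, act_coe]
    rw [← smul_mul_assoc]
    exact hmul hk _ _ _ (by rw [map_smul, sec_spec, sec_spec]) (ker_apply q m)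

lemma bil_apply (b : B) (m : Ker q) : bil hq hk b m = act hq b m := rfl

include hk in
lemma bil_one (m : Ker q) : bil hq hk 1 m = m := by
  refine Subtype.ext ?_
  have : (bil hq hk 1 m : D) = sec hq 1 * m := rfl
  rw [this, hmul hk (sec hq 1) 1 m (by rw [sec_spec, map_one]) (ker_apply q m), one_mul]

/-- `ρ : M ⊗ B → M`, the action map. -/
noncomputable def rho : (Ker q) ⊗[A] B →ₗ[A] Ker q :=
  TensorProduct.lift (bil hq hk).flip

lemma rho_tmul (m : Ker q) (b : B) : rho hq hk (m ⊗ₜ b) = bil hq hk b m := rfl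

variable (q) in
/-- `ν : M ⊗ B → D ⊗ B`. -/
noncomputable def nu : (Ker q) ⊗[A] B →ₗ[A] D ⊗[A] B :=
  LinearMap.rTensor B (Ker q).subtype

variable (q) in
lemma nu_tmul (m : Ker q) (b : B) : nu q (m ⊗ₜ b) = (m : D) ⊗ₜ b := rfl

variable (q) in
/-- `π = q ⊗ id : D ⊗ B → B ⊗ B`. -/
noncomputable def piMap : D ⊗[A] B →ₐ[A] B ⊗[A] B :=
  Algebra.TensorProduct.map q (AlgHom.id A B)

variable (q) in
lemma piMap_tmul (d : D) (b : B) : piMap q (d ⊗ₜ b) = q d ⊗ₜ b := rfl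

variable (q) in
lemma piMap_eq_rTensor (x : D ⊗[A] B) :
    piMap q x = LinearMap.rTensor B q.toLinearMap x := by
  induction x with
  | zero => simp
  | tmul d b => simp [piMap_tmul, LinearMap.rTensor_tmul]
  | add x y hx hy => simp [map_add, hx, hy]

include hq in
lemma exists_nu (x : D ⊗[A] B) (hx : piMap q x = 0) : ∃ w, nu q w = x := by
  have hex : Function.Exact ((Ker q).subtype.rTensor B) (q.toLinearMap.rTensor B) :=
    rTensor_exact B (LinearMap.exact_subtype_ker_map q.toLinearMap) hq
  have := (hex x).mp (by rw [← piMap_eq_rTensor]; exact hx)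
  exact this

lemma nu_inj [Module.Flat A B] : Function.Injective (nu q) :=
  Module.Flat.rTensor_preserves_injective_linearMap _ (Submodule.injective_subtype _)

include hk in
/-- The key compatibility: `ρ` intertwines multiplication by `y` with the action of
`lmul' (π y)`. -/
lemma key (y : D ⊗[A] B) (w : (Ker q) ⊗[A] B) :
    ∃ w', nu q w' = y * nu q w ∧
      rho hq hk w' = bil hq hk (Algebra.TensorProduct.lmul' A (piMap q y)) (rho hq hk w) := by
  induction y with
  | zero =>
    exact ⟨0, by simp, by simp⟩
  | tmul d₀ c =>
    induction w with
    | zero =>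
      exact ⟨0, by simp, by simp⟩
    | tmul m b =>
      refine ⟨(⟨d₀ * m, ?_⟩ : Ker q) ⊗ₜ (c * b), ?_, ?_⟩
      · simp only [LinearMap.mem_ker, AlgHom.toLinearMap_apply, map_mul, ker_apply q m, mul_zero]
      · rw [nu_tmul, nu_tmul, Algebra.TensorProduct.tmul_mul_tmul]
      · rw [rho_tmul, rho_tmul, piMap_tmul, Algebra.TensorProduct.lmul'_apply_tmul]
        refine Subtype.ext ?_
        show sec hq (c * b) * (d₀ * m) = sec hq (q d₀ * c) * (act hq b m : D)
        rw [act_coe, ← mul_assoc, ← mul_assoc]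
        exact hmul hk _ _ _
          (by rw [map_mul, map_mul, sec_spec, sec_spec, sec_spec]; ring) (ker_apply q m)
    | add w₁ w₂ h₁ h₂ =>
      obtain ⟨w₁', e₁, f₁⟩ := h₁
      obtain ⟨w₂', e₂, f₂⟩ := h₂
      exact ⟨w₁' + w₂', by rw [map_add, e₁, e₂, map_add, mul_add],
        by rw [map_add, f₁, f₂, map_add, map_add]⟩
  | add y₁ y₂ h₁ h₂ =>
    obtain ⟨w₁', e₁, f₁⟩ := h₁
    obtain ⟨w₂', e₂, f₂⟩ := h₂
    exact ⟨w₁' + w₂', by rw [map_add, e₁, e₂, add_mul],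
      by rw [map_add, f₁, f₂, map_add, map_add, map_add, LinearMap.add_apply]⟩

variable [Module.Flat A B]
variable (t : B ⊗[A] B)
variable (ht1 : ∀ s : B, ((1 : B) ⊗ₜ[A] s - s ⊗ₜ[A] (1 : B)) * t = 0)
variable (ht2 : Algebra.TensorProduct.lmul' A t = 1)
variable (τ : D ⊗[A] B) (hτ : piMap q τ = t)

include hτ ht1 in
lemma pi_x_zero (d : D) (b : B) (hd : q d = b) :
    piMap q (τ * (d ⊗ₜ 1 - 1 ⊗ₜ b)) = 0 := by
  rw [map_mul, map_sub, piMap_tmul, piMap_tmul, hτ, hd, map_one]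
  have := ht1 b
  linear_combination -this

include ht1 hτ in
lemma ex_w (b : B) :
    ∃ w, nu q w = τ * ((sec hq b) ⊗ₜ 1 - 1 ⊗ₜ b) :=
  exists_nu hq _ (pi_x_zero t ht1 τ hτ (sec hq b) b (sec_spec hq b))

/-- The candidate ring-theoretic section of `q`. -/
noncomputable def sect (b : B) : D :=
  sec hq b - (rho hq hk (Classical.choose (ex_w hq t ht1 τ hτ b)) : D)

include ht2 in
lemma sect_eq (b : B) (d : D) (hd : q d = b) (w : (Ker q) ⊗[A] B)
    (hw : nu q w = τ * (d ⊗ₜ 1 - 1 ⊗ₜ b)) :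
    sect hq hk t ht1 τ hτ b = d - (rho hq hk w : D) := by
  set w₀ := Classical.choose (ex_w hq t ht1 τ hτ b) with hw₀def
  have hw₀ : nu q w₀ = τ * ((sec hq b) ⊗ₜ 1 - 1 ⊗ₜ b) :=
    Classical.choose_spec (ex_w hq t ht1 τ hτ b)
  have hm : q (d - sec hq b) = 0 := by rw [map_sub, hd, sec_spec, sub_self]
  set m : Ker q := ⟨d - sec hq b, LinearMap.mem_ker.mpr hm⟩ with hmdef
  obtain ⟨w', e', f'⟩ := key hq hk τ (m ⊗ₜ 1)
  have hνm : nu q (m ⊗ₜ 1) = (d - sec hq b) ⊗ₜ (1 : B) := rfl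
  have hsub : nu q (w - w₀) = nu q w' := by
    rw [map_sub, hw, hw₀, e', hνm]
    rw [TensorProduct.sub_tmul]
    ring
  have hww : w - w₀ = w' := nu_inj hsub
  have hρ' : rho hq hk w' = m := by
    rw [f', hτ, ht2, bil_one hq hk, rho_tmul, bil_one hq hk]
  have : rho hq hk w - rho hq hk w₀ = m := by
    rw [← map_sub, hww, hρ']
  have hco : (rho hq hk w : D) - (rho hq hk w₀ : D) = d - sec hq b := by
    have := congrArg (Subtype.val) this
    simpa [hmdef] using this
  rw [sect]
  rw [← hw₀def]
  linear_combination hco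

include ht2 in
lemma sect_spec (b : B) : q (sect hq hk t ht1 τ hτ b) = b := by
  rw [sect, map_sub, sec_spec, ker_apply, sub_zero]

include ht2 in
lemma sect_add (b b' : B) :
    sect hq hk t ht1 τ hτ (b + b') =
      sect hq hk t ht1 τ hτ b + sect hq hk t ht1 τ hτ b' := by
  set wb := Classical.choose (ex_w hq t ht1 τ hτ b) with hwbdef
  have hwb : nu q wb = τ * ((sec hq b) ⊗ₜ 1 - 1 ⊗ₜ b) :=
    Classical.choose_spec (ex_w hq t ht1 τ hτ b)
  set wb' := Classical.choose (ex_w hq t ht1 τ hτ b') with hwb'def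
  have hwb' : nu q wb' = τ * ((sec hq b') ⊗ₜ 1 - 1 ⊗ₜ b') :=
    Classical.choose_spec (ex_w hq t ht1 τ hτ b')
  have h := sect_eq hq hk t ht1 ht2 τ hτ (b + b') (sec hq b + sec hq b')
    (by rw [map_add, sec_spec, sec_spec]) (wb + wb')
    (by rw [map_add, hwb, hwb', TensorProduct.add_tmul, TensorProduct.tmul_add]; ring)
  rw [h, map_add, sect, sect, ← hwbdef, ← hwb'def, Submodule.coe_add]
  ring

include ht2 in
lemma sect_one : sect hq hk t ht1 τ hτ 1 = 1 := by
  have h := sect_eq hq hk t ht1 ht2 τ hτ 1 1 (map_one q) 0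
    (by rw [map_zero, sub_self, mul_zero])
  rw [h, map_zero, Submodule.coe_zero, sub_zero]

include ht2 in
lemma sect_algebraMap (a : A) :
    sect hq hk t ht1 τ hτ (algebraMap A B a) = algebraMap A D a := by
  have key0 : (algebraMap A D a) ⊗ₜ[A] (1 : B) = (1 : D) ⊗ₜ[A] (algebraMap A B a) := by
    rw [Algebra.algebraMap_eq_smul_one, Algebra.algebraMap_eq_smul_one,
      TensorProduct.smul_tmul]
  have h := sect_eq hq hk t ht1 ht2 τ hτ (algebraMap A B a) (algebraMap A D a)
    (q.commutes a) 0 (by rw [map_zero, key0, sub_self, mul_zero])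
  rw [h, map_zero, Submodule.coe_zero, sub_zero]

include ht2 in
lemma sect_mul (b b' : B) :
    sect hq hk t ht1 τ hτ (b * b') =
      sect hq hk t ht1 τ hτ b * sect hq hk t ht1 τ hτ b' := by
  set wb := Classical.choose (ex_w hq t ht1 τ hτ b) with hwbdef
  have hwb : nu q wb = τ * ((sec hq b) ⊗ₜ 1 - 1 ⊗ₜ b) :=
    Classical.choose_spec (ex_w hq t ht1 τ hτ b)
  set wb' := Classical.choose (ex_w hq t ht1 τ hτ b') with hwb'def
  have hwb' : nu q wb' = τ * ((sec hq b') ⊗ₜ 1 - 1 ⊗ₜ b') :=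
    Classical.choose_spec (ex_w hq t ht1 τ hτ b')
  set d := sec hq b
  set d' := sec hq b'
  set r := rho hq hk wb with hrdef
  set r' := rho hq hk wb' with hr'def
  -- three applications of the key lemma
  obtain ⟨w₁, e₁, f₁⟩ := key hq hk ((1 : D) ⊗ₜ b) wb'
  obtain ⟨w₂, e₂, f₂⟩ := key hq hk ((1 : D) ⊗ₜ b') wb
  obtain ⟨w₃, e₃, f₃⟩ := key hq hk (d' ⊗ₜ (1 : B) - (1 : D) ⊗ₜ b') wb
  have f₁' : rho hq hk w₁ = bil hq hk b r' := by
    rw [f₁, piMap_tmul, map_one, Algebra.TensorProduct.lmul'_apply_tmul, one_mul, hr'def]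
  have f₂' : rho hq hk w₂ = bil hq hk b' r := by
    rw [f₂, piMap_tmul, map_one, Algebra.TensorProduct.lmul'_apply_tmul, one_mul, hrdef]
  have f₃' : rho hq hk w₃ = 0 := by
    rw [f₃]
    have : Algebra.TensorProduct.lmul' A (piMap q (d' ⊗ₜ (1 : B) - (1 : D) ⊗ₜ b')) = 0 := by
      rw [map_sub, piMap_tmul, piMap_tmul, map_one, map_sub,
        Algebra.TensorProduct.lmul'_apply_tmul, Algebra.TensorProduct.lmul'_apply_tmul,
        sec_spec, mul_one, one_mul, sub_self]
    rw [this, map_zero, LinearMap.zero_apply]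
  -- the combination W
  have hW : nu q (w₁ + w₂ + w₃) = τ * ((d * d') ⊗ₜ 1 - 1 ⊗ₜ (b * b')) := by
    rw [map_add, map_add, e₁, e₂, e₃, hwb, hwb']
    have hpp' : (d * d') ⊗ₜ[A] (1 : B) = (d ⊗ₜ[A] (1 : B)) * (d' ⊗ₜ[A] (1 : B)) := by
      rw [Algebra.TensorProduct.tmul_mul_tmul, mul_one]
    have hcc' : (1 : D) ⊗ₜ[A] (b * b') = ((1 : D) ⊗ₜ[A] b) * ((1 : D) ⊗ₜ[A] b') := by
      rw [Algebra.TensorProduct.tmul_mul_tmul, mul_one]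
    rw [hpp', hcc']
    ring
  have h := sect_eq hq hk t ht1 ht2 τ hτ (b * b') (d * d')
    (by rw [map_mul, sec_spec, sec_spec]) (w₁ + w₂ + w₃) hW
  rw [h]
  have hrr' : (r : D) * (r' : D) = 0 := hk _ _ (ker_apply q r) (ker_apply q r')
  have hbr' : (bil hq hk b r' : D) = d * r' := rfl
  have hb'r : (bil hq hk b' r : D) = d' * r := rfl
  have hsb : sect hq hk t ht1 τ hτ b = d - (r : D) := by rw [sect, ← hwbdef, ← hrdef]
  have hsb' : sect hq hk t ht1 τ hτ b' = d' - (r' : D) := by rw [sect, ← hwb'def, ← hr'def]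
  rw [hsb, hsb', map_add, map_add, f₁', f₂', f₃', Submodule.coe_add, Submodule.coe_add,
    hbr', hb'r, Submodule.coe_zero]
  ring_nf
  linear_combination -hrr'

include ht2 in
lemma sect_zero : sect hq hk t ht1 τ hτ 0 = 0 := by
  have h := sect_eq hq hk t ht1 ht2 τ hτ 0 0 (map_zero q) 0
    (by rw [map_zero, TensorProduct.zero_tmul, TensorProduct.tmul_zero, sub_self, mul_zero])
  rw [h, map_zero, Submodule.coe_zero, sub_zero]

/-- The algebra section of `q`. -/
noncomputable def sectHom : B →ₐ[A] D where
  toFun := sect hq hk t ht1 τ hτ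
  map_one' := sect_one hq hk t ht1 ht2 τ hτ
  map_mul' := sect_mul hq hk t ht1 ht2 τ hτ
  map_zero' := sect_zero hq hk t ht1 ht2 τ hτ
  map_add' := sect_add hq hk t ht1 ht2 τ hτ
  commutes' := sect_algebraMap hq hk t ht1 ht2 τ hτ

lemma q_sectHom (b : B) : q (sectHom hq hk t ht1 ht2 τ hτ b) = b :=
  sect_spec hq hk t ht1 ht2 τ hτ b

end

/-- Existence of an algebra section of a square-zero surjection onto a flat algebra
admitting a "diagonal idempotent". -/
theorem exists_section [Module.Flat A B] (q : D →ₐ[A] B)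
    (hq : Function.Surjective ⇑q)
    (hk : ∀ d₁ d₂ : D, q d₁ = 0 → q d₂ = 0 → d₁ * d₂ = 0)
    (t : B ⊗[A] B)
    (ht1 : ∀ s : B, ((1 : B) ⊗ₜ[A] s - s ⊗ₜ[A] (1 : B)) * t = 0)
    (ht2 : Algebra.TensorProduct.lmul' A t = 1) :
    ∃ g : B →ₐ[A] D, ∀ b, q (g b) = b := by
  have hπ : Function.Surjective ⇑(piMap q) := by
    intro z
    induction z with
    | zero => exact ⟨0, map_zero _⟩
    | tmul b₁ b₂ => exact ⟨sec hq b₁ ⊗ₜ b₂, by rw [piMap_tmul, sec_spec]⟩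
    | add x y hx hy =>
      obtain ⟨x', hx'⟩ := hx
      obtain ⟨y', hy'⟩ := hy
      exact ⟨x' + y', by rw [map_add, hx', hy']⟩
  obtain ⟨τ, hτ⟩ := hπ t
  exact ⟨sectHom hq hk t ht1 ht2 τ hτ, q_sectHom hq hk t ht1 ht2 τ hτ⟩

end EtaleAuxProof

/-- A flat, finitely presented, formally unramified algebra is étale
(formally étale and of finite presentation). -/
theorem etale_of_flat_finitePresentation_formallyUnramified
    (A B : Type u) [CommRing A] [CommRing B] [Algebra A B]
    [Module.Flat A B] [Algebra.FinitePresentation A B] [Algebra.FormallyUnramified A B] :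
    Algebra.Etale A B := by
  obtain ⟨t, ht1, ht2⟩ :=
    (Algebra.FormallyUnramified.iff_exists_tensorProduct (R := A) (S := B)).mp inferInstance
  let f : MvPolynomial B A →ₐ[A] B := MvPolynomial.aeval _root_.id
  have hf : Function.Surjective ⇑f := fun b => ⟨MvPolynomial.X b, by simp [f]⟩
  let q := f.kerSquareLift
  have hq : Function.Surjective ⇑q := by
    intro b
    obtain ⟨p, hp⟩ := hf b
    exact ⟨Ideal.Quotient.mk _ p, hp⟩
  have hk : ∀ d₁ d₂, q d₁ = 0 → q d₂ = 0 → d₁ * d₂ = 0 := by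
    intro d₁ d₂ h1 h2
    have m1 : d₁ ∈ (RingHom.ker f.toRingHom).cotangentIdeal :=
      (AlgHom.ker_kerSquareLift f).le h1
    have m2 : d₂ ∈ (RingHom.ker f.toRingHom).cotangentIdeal :=
      (AlgHom.ker_kerSquareLift f).le h2
    have h' : d₁ * d₂ ∈ (RingHom.ker f.toRingHom).cotangentIdeal *
        (RingHom.ker f.toRingHom).cotangentIdeal := Ideal.mul_mem_mul m1 m2
    have hbot : (RingHom.ker f.toRingHom).cotangentIdeal *
        (RingHom.ker f.toRingHom).cotangentIdeal = ⊥ := by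
      rw [← pow_two, Ideal.cotangentIdeal_square]
    rwa [hbot, Ideal.mem_bot] at h'
  obtain ⟨g, hg⟩ := EtaleAuxProof.exists_section q hq hk t ht1 ht2
  have hsm : Algebra.FormallySmooth A B :=
    Algebra.FormallySmooth.of_split f g (AlgHom.ext fun b => hg b)
  exact ⟨Algebra.FormallyEtale.of_formallyUnramified_and_formallySmooth, inferInstance⟩
end

section
/- Let R be a commutative ring, n a natural number, f : Fin n → R[x₁,…,x_n] a family of n polynomials in n variables, I the ideal generated by the f j, and S = R[x₁,…,x_n]/I. Assume S is flat as an R-module. Let J be the n × n Jacobian matrix over S whose (i, j) entry is the image in S of ∂f_j/∂x_i. Then S is étale over R if and only if the determinant of J is a unit in S. -/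
universe u

set_option maxHeartbeats 1000000 in
set_option synthInstance.maxHeartbeats 1000000 in
open MvPolynomial in
/-- If `S = R[x₁,…,xₙ]⧸I` with `I = (f₁,…,fₙ)` and `S` is flat over `R`, then `S` is étale
over `R` if and only if the determinant of the Jacobian matrix `J = (∂f_j/∂x_i)` is a unit
in `S`. -/
theorem etale_iff_isUnit_jacobian_det {R : Type u} [CommRing R] {n : ℕ}
    (f : Fin n → MvPolynomial (Fin n) R)
    (I : Ideal (MvPolynomial (Fin n) R)) (hI : I = Ideal.span (Set.range f))
    (hflat : Module.Flat R (MvPolynomial (Fin n) R ⧸ I))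
    (J : Matrix (Fin n) (Fin n) (MvPolynomial (Fin n) R ⧸ I))
    (hJ : ∀ i j, J i j = Ideal.Quotient.mk I (pderiv i (f j))) :
    Algebra.Etale R (MvPolynomial (Fin n) R ⧸ I) ↔ IsUnit J.det := by
  classical
  have haeval : (aeval (R := R) (fun i : Fin n => Ideal.Quotient.mk I (X i)) :
      MvPolynomial (Fin n) R →ₐ[R] MvPolynomial (Fin n) R ⧸ I) = Ideal.Quotient.mkₐ R I := by
    apply MvPolynomial.algHom_ext
    intro i
    simp [Ideal.Quotient.mkₐ_eq_mk]
  have hsurj : Function.Surjective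
      (aeval (R := R) (fun i : Fin n => Ideal.Quotient.mk I (X i)) :
        MvPolynomial (Fin n) R →ₐ[R] MvPolynomial (Fin n) R ⧸ I) := by
    rw [haeval]
    exact fun x => Ideal.Quotient.mkₐ_surjective R I x
  let P : Algebra.Generators R (MvPolynomial (Fin n) R ⧸ I) (Fin n) :=
    { val := fun i => Ideal.Quotient.mk I (X i)
      σ' := fun s => (hsurj s).choose
      aeval_val_σ' := fun s => (hsurj s).choose_spec }
  have hval : P.val = fun i : Fin n => Ideal.Quotient.mk I (X i) := rfl
  have haevalval : ∀ q : MvPolynomial (Fin n) R,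
      aeval P.val q = Ideal.Quotient.mk I q := by
    intro q
    have := DFunLike.congr_fun haeval q
    rw [Ideal.Quotient.mkₐ_eq_mk] at this
    exact this
  have hker : P.toExtension.ker = I := by
    ext p
    constructor
    · intro hp
      have h2 : aeval P.val p = 0 := hp
      exact (Ideal.Quotient.eq_zero_iff_mem (I := I)).mp ((haevalval p).symm.trans h2)
    · intro hp
      have h2 : aeval P.val p = 0 := by
        exact (haevalval p).trans (Ideal.Quotient.eq_zero_iff_mem.mpr hp)
      exact h2
  have hmemI : ∀ j, f j ∈ I := by
    intro j; rw [hI]; exact Ideal.subset_span ⟨j, rfl⟩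
  have hmem : ∀ j, f j ∈ P.toExtension.ker := by
    intro j
    show aeval P.val (f j) = 0
    rw [haevalval, Ideal.Quotient.eq_zero_iff_mem]
    exact hmemI j
  -- the generators of the conormal module
  set g : Fin n → P.toExtension.Cotangent :=
    fun j => Algebra.Extension.Cotangent.mk ⟨f j, hmem j⟩ with hg
  -- scalar multiplication by a residue class
  have hsmul_eq : ∀ (p q : P.toExtension.Ring) (w : P.toExtension.ker.Cotangent),
      Ideal.Quotient.mk I (p - q) = 0 → p • w = q • w := by
    intro p q w hpq
    rw [← sub_eq_zero, ← sub_smul]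
    refine Algebra.Extension.Cotangent.smul_eq_zero_of_mem _ ?_ _
    show aeval P.val (p - q) = 0
    exact (haevalval (p - q)).trans hpq
  have hσ : ∀ t : MvPolynomial (Fin n) R ⧸ I,
      Ideal.Quotient.mk I (P.toExtension.σ t) = t := by
    intro t
    rw [← haevalval (P.toExtension.σ t)]
    exact P.aeval_val_σ t
  have hterm : ∀ (s : P.toExtension.Ring) (z : P.toExtension.ker),
      (Ideal.Quotient.mk I s) • Algebra.Extension.Cotangent.mk z
        = Algebra.Extension.Cotangent.mk (s • z) := by
    intro s z
    apply Algebra.Extension.Cotangent.ext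
    rw [Algebra.Extension.Cotangent.val_smul, Algebra.Extension.Cotangent.val_mk,
      Algebra.Extension.Cotangent.val_mk, _root_.map_smul]
    refine hsmul_eq _ _ _ ?_
    erw [_root_.map_sub, hσ, sub_self]
  -- every element of the conormal module is a combination of the `g j`
  have hgen : ∀ x : P.toExtension.Cotangent,
      ∃ v : Fin n → MvPolynomial (Fin n) R ⧸ I, ∑ j, v j • g j = x := by
    intro x
    obtain ⟨y, rfl⟩ := Algebra.Extension.Cotangent.mk_surjective x
    have hy : (y : P.toExtension.Ring) ∈ Ideal.span (Set.range f) := by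
      rw [← hI]
      exact (Ideal.Quotient.eq_zero_iff_mem (I := I)).mp (((haevalval (y : P.toExtension.Ring)).symm).trans y.2)
    obtain ⟨c, hc⟩ := Ideal.mem_span_range_iff_exists_fun.mp hy
    refine ⟨fun j => Ideal.Quotient.mk I (c j), ?_⟩
    simp only [hg]
    rw [Finset.sum_congr rfl (fun j _ => hterm (c j) ⟨f j, hmem j⟩), ← _root_.map_sum]
    congr 1
    apply Subtype.ext
    show ((∑ j, (c j : P.toExtension.Ring) • (⟨f j, hmem j⟩ : P.toExtension.ker) :
        P.toExtension.ker) : P.toExtension.Ring) = (y : P.toExtension.Ring)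
    rw [← hc]
    simp [smul_eq_mul]
    rfl
  -- the Jacobian matrix represents the cotangent complex
  have hrepr : ∀ (i j : Fin n),
      P.cotangentSpaceBasis.repr (P.toExtension.cotangentComplex (g j)) i = J i j := by
    intro i j
    simp only [hg]
    rw [Algebra.Extension.cotangentComplex_mk,
      Algebra.Generators.cotangentSpaceBasis_repr_one_tmul, hJ i j]
    exact haevalval _
  have hkey : ∀ (v : Fin n → MvPolynomial (Fin n) R ⧸ I) (i : Fin n),
      P.cotangentSpaceBasis.repr (P.toExtension.cotangentComplex (∑ j, v j • g j)) i
        = (J.mulVec v) i := by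
    intro v i
    simp only [_root_.map_sum, _root_.map_smul, Finset.sum_apply', Finsupp.smul_apply, smul_eq_mul]
    rw [show (J.mulVec v) i = ∑ j, J i j * v j from rfl]
    exact Finset.sum_congr rfl fun j _ => by rw [hrepr i j, mul_comm]
  constructor
  · -- étale → the Jacobian determinant is a unit
    intro het
    haveI := het.formallyEtale
    haveI : Algebra.FormallyUnramified R (MvPolynomial (Fin n) R ⧸ I) := inferInstance
    haveI hΩ : Subsingleton (Ω[(MvPolynomial (Fin n) R ⧸ I)⁄R]) :=
      Algebra.FormallyUnramified.subsingleton_kaehlerDifferential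
    have hsurjC : Function.Surjective P.toExtension.cotangentComplex := by
      intro z
      exact (P.toExtension.exact_cotangentComplex_toKaehler z).mp (Subsingleton.elim _ _)
    have hmv : Function.Surjective J.mulVec := by
      intro w
      obtain ⟨u, hu⟩ := hsurjC (∑ i, w i • P.cotangentSpaceBasis i)
      obtain ⟨v, rfl⟩ := hgen u
      refine ⟨v, ?_⟩
      funext i
      rw [← hkey v i, hu, _root_.map_sum]
      simp [Finsupp.single_apply, Finset.sum_apply', mul_ite]
    have : IsUnit J := Matrix.mulVec_surjective_iff_isUnit.mp hmv
    exact (Matrix.isUnit_iff_isUnit_det J).mp this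
  · -- Jacobian determinant a unit → étale
    intro hdet
    have hJu : IsUnit J := (Matrix.isUnit_iff_isUnit_det J).mpr hdet
    have hmvinj : Function.Injective J.mulVec := by
      intro a c h
      have h' := congrArg (fun u => J⁻¹.mulVec u) h
      simpa [Matrix.mulVec_mulVec, Matrix.nonsing_inv_mul J hdet, Matrix.one_mulVec] using h'
    have hinjC : Function.Injective P.toExtension.cotangentComplex := by
      intro x y h
      obtain ⟨a, rfl⟩ := hgen x
      obtain ⟨c, rfl⟩ := hgen y
      have hac : J.mulVec a = J.mulVec c := by
        funext i
        rw [← hkey a i, ← hkey c i, h]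
      have : a = c := hmvinj hac
      rw [this]
    have hsurjC : Function.Surjective P.toExtension.cotangentComplex := by
      intro z
      refine ⟨∑ j, (J⁻¹.mulVec (fun i => P.cotangentSpaceBasis.repr z i)) j • g j, ?_⟩
      apply P.cotangentSpaceBasis.ext_elem
      intro i
      rw [hkey (J⁻¹.mulVec (fun i => P.cotangentSpaceBasis.repr z i)) i, Matrix.mulVec_mulVec,
        Matrix.mul_nonsing_inv J hdet, Matrix.one_mulVec]
    have hΩ : Subsingleton (Ω[(MvPolynomial (Fin n) R ⧸ I)⁄R]) := by
      refine subsingleton_of_forall_eq 0 fun w => ?_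
      obtain ⟨z, rfl⟩ := P.toExtension.toKaehler_surjective w
      obtain ⟨u, rfl⟩ := hsurjC z
      exact (P.toExtension.exact_cotangentComplex_toKaehler
        (P.toExtension.cotangentComplex u)).mpr ⟨u, rfl⟩
    haveI : Algebra.FormallyUnramified R (MvPolynomial (Fin n) R ⧸ I) := ⟨hΩ⟩
    haveI h1P : Subsingleton P.toExtension.H1Cotangent :=
      (Algebra.Extension.subsingleton_h1Cotangent _).mpr hinjC
    haveI h1 : Subsingleton (Algebra.H1Cotangent R (MvPolynomial (Fin n) R ⧸ I)) :=
      P.equivH1Cotangent.toEquiv.symm.subsingleton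
    haveI : Algebra.FormallySmooth R (MvPolynomial (Fin n) R ⧸ I) :=
      (Algebra.formallySmooth_iff _ _).mpr ⟨inferInstance, h1⟩
    haveI : Algebra.FormallyEtale R (MvPolynomial (Fin n) R ⧸ I) :=
      Algebra.FormallyEtale.of_formallyUnramified_and_formallySmooth
    haveI : Algebra.FinitePresentation R (MvPolynomial (Fin n) R ⧸ I) := by
      rw [hI]
      exact Algebra.FinitePresentation.quotient (Submodule.fg_span (Set.finite_range f))
    exact ⟨inferInstance, inferInstance⟩
end
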